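/- Let κ be a positive integer, set k = (κ−1)!, let q be a positive integer and let Y ⊆ ZMod q satisfy 0 ∉ (k)Y. Then the digraph D with vertex set ZMod q and arc relation z₁ → z₂ iff z₁ − z₂ ∈ Y has no directed cycle of length s for any s with 1 ≤ s ≤ κ − 1. -/
import Mathlib


open Finset

/-- A digraph with arc relation `E` has a directed cycle of length `s ≥ 1`:
an injective `z : Fin s → V` with an arc from each `z t` to `z (t+1 mod s)`. -/
def HasCycleOfLength {V : Type*} (E : V → V → Prop) (s : ℕ) : Prop :=
  ∃ z : Fin s → V, Function.Injective z ∧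
    ∀ t : Fin s, E (z t) (z ⟨(t.1 + 1) % s, Nat.mod_lt _ t.pos⟩)

open Pointwise

/-- The k-fold sumset `(k)Y = {y₁ + y₂ + ⋯ + y_k : each yᵢ ∈ Y}`. -/
def kSum {q : ℕ} (k : ℕ) (Y : Set (ZMod q)) : Set (ZMod q) :=
  {z | ∃ y : Fin k → ZMod q, (∀ i, y i ∈ Y) ∧ ∑ i, y i = z}

lemma sum_mod_aux {M : Type*} [AddCommMonoid M] (s : ℕ) (hs : 0 < s)
    (f : Fin s → M) (m : ℕ) :
    ∑ i ∈ range (s * m), f ⟨i % s, Nat.mod_lt _ hs⟩ = m • ∑ t : Fin s, f t := by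
  have hbase : ∑ i ∈ range s, f ⟨i % s, Nat.mod_lt _ hs⟩ = ∑ t : Fin s, f t := by
    rw [← Fin.sum_univ_eq_sum_range (fun i => f ⟨i % s, Nat.mod_lt _ hs⟩) s]
    apply Fintype.sum_congr
    intro t
    congr 1
    exact Fin.ext (Nat.mod_eq_of_lt t.2)
  induction m with
  | zero => simp
  | succ m ih =>
    rw [Nat.mul_succ, Finset.sum_range_add, ih, succ_nsmul]
    congr 1
    rw [← hbase]
    apply Finset.sum_congr rfl
    intro i _
    congr 1
    exact Fin.ext (Nat.mul_add_mod _ _ _)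

/-- If 0 ∉ ((κ-1)!)Y then the digraph on ℤ/q with arcs z₁ → z₂ iff z₁ - z₂ ∈ Y
has no directed cycle of length shorter than κ. -/
theorem no_short_cycles (κ : ℕ) (hκ : 0 < κ) (q : ℕ) (hq : 0 < q)
    (Y : Set (ZMod q)) (hY : (0 : ZMod q) ∉ kSum (Nat.factorial (κ - 1)) Y) :
    ∀ s : ℕ, 1 ≤ s → s ≤ κ - 1 →
      ¬ HasCycleOfLength (fun z₁ z₂ : ZMod q => z₁ - z₂ ∈ Y) s := by
  intro s hs1 hs2 hcyc
  obtain ⟨z, hinj, harc⟩ := hcyc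
  have hspos : 0 < s := hs1
  haveI : NeZero s := ⟨hspos.ne'⟩
  obtain ⟨m, hm⟩ := Nat.dvd_factorial hspos hs2
  set k := Nat.factorial (κ - 1) with hk
  -- the edge differences
  set g : Fin s → ZMod q := fun t => z t - z (t + 1) with hg
  have hgY : ∀ t, g t ∈ Y := by
    intro t
    have := harc t
    have heq : (⟨(t.1 + 1) % s, Nat.mod_lt _ t.pos⟩ : Fin s) = t + 1 := by
      ext
      simp [Fin.add_def, Nat.add_mod]
    rwa [heq] at this
  have hgsum : ∑ t : Fin s, g t = 0 := by
    have hbij : ∑ t : Fin s, z (t + 1) = ∑ t : Fin s, z t :=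
      Fintype.sum_equiv (Equiv.addRight (1 : Fin s)) _ _ (fun t => rfl)
    simp [hg, Finset.sum_sub_distrib, hbij]
  apply hY
  refine ⟨fun i => g ⟨i.1 % s, Nat.mod_lt _ hspos⟩, fun i => hgY _, ?_⟩
  have : ∑ i : Fin k, g ⟨i.1 % s, Nat.mod_lt _ hspos⟩
      = ∑ i ∈ range k, g ⟨i % s, Nat.mod_lt _ hspos⟩ :=
    Fin.sum_univ_eq_sum_range (fun i => g ⟨i % s, Nat.mod_lt _ hspos⟩) k
  rw [this, hm, sum_mod_aux s hspos g m, hgsum, smul_zero]
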